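/- Let H be a complex Hilbert space, let A be a norm-closed subalgebra of B(H), and let (e_i) be a right contractive approximate identity for A. Let T be the triple system generated by A in B(H). Then for every x ∈ T, ‖x e_i − x‖ → 0 and ‖x e_i* − x‖ → 0. (In particular (e_i) is a right contractive approximate identity for T.) -/

import Mathlib

open Filter Topology

/-- The set of `x` with `x * e i → x` is closed when `‖e i‖ ≤ 1`. -/
lemma stmt5_aux_closed {R : Type*} [NonUnitalNormedRing R] {ι : Type*} [Preorder ι]
    (e : ι → R) (he : ∀ i, ‖e i‖ ≤ 1) :
    IsClosed {x : R | Tendsto (fun i => x * e i) atTop (𝓝 x)} := by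
  apply IsSeqClosed.isClosed
  intro u x hu hux
  rw [Set.mem_setOf_eq, Metric.tendsto_nhds]
  intro ε hε
  obtain ⟨n, hn⟩ := Metric.tendsto_atTop.1 hux (ε / 3) (by linarith)
  have h1 : ‖u n - x‖ < ε / 3 := by
    have := hn n le_rfl
    rwa [dist_eq_norm] at this
  have h1' : ‖x - u n‖ < ε / 3 := by rwa [norm_sub_rev] at h1
  have h2 := (Metric.tendsto_nhds.1 (hu n)) (ε / 3) (by linarith)
  filter_upwards [h2] with i hi
  rw [dist_eq_norm] at hi ⊢
  have key : x * e i - x = (x - u n) * e i + (u n * e i - u n) + (u n - x) := by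
    noncomm_ring
  calc ‖x * e i - x‖ = ‖(x - u n) * e i + (u n * e i - u n) + (u n - x)‖ := by rw [key]
    _ ≤ ‖(x - u n) * e i‖ + ‖u n * e i - u n‖ + ‖u n - x‖ := norm_add₃_le
    _ ≤ ‖x - u n‖ * ‖e i‖ + ‖u n * e i - u n‖ + ‖u n - x‖ := by
        gcongr; exact norm_mul_le _ _
    _ ≤ ‖x - u n‖ * 1 + ‖u n * e i - u n‖ + ‖u n - x‖ := by
        gcongr; exact he i
    _ < ε / 3 * 1 + ε / 3 + ε / 3 := by gcongr
    _ = ε := by ring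

/-- Key C*-type estimate: if `‖e‖ ≤ 1` then
`‖a * e* - a‖ ≤ √(2 * ‖a * e - a‖ * ‖a‖)` for Hilbert space operators. -/
lemma stmt5_aux_star {H : Type*} [NormedAddCommGroup H] [InnerProductSpace ℂ H]
    [CompleteSpace H] (a f : H →L[ℂ] H) (hf : ‖f‖ ≤ 1) :
    ‖a * star f - a‖ ≤ Real.sqrt (2 * ‖a * f - a‖ * ‖a‖) := by
  set K : ℝ := 2 * ‖a * f - a‖ * ‖a‖ with hK
  have hK0 : 0 ≤ K := by positivity
  have hstar : ‖a * star f - a‖ = ‖star (a * star f - a)‖ := (norm_star _).symm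
  rw [hstar]
  have hsb : star (a * star f - a) = f * star a - star a := by
    simp [star_sub, star_mul]
  rw [hsb]
  -- bound the operator norm pointwise
  apply ContinuousLinearMap.opNorm_le_bound _ (Real.sqrt_nonneg K)
  intro ξ
  set η : H := (star a) ξ with hη
  have happ : (f * star a - star a) ξ = f η - η := by
    simp [hη, ContinuousLinearMap.mul_apply]
  rw [happ]
  -- show ‖f η - η‖ ^ 2 ≤ K * ‖ξ‖ ^ 2
  have hsq : ‖f η - η‖ ^ 2 ≤ K * ‖ξ‖ ^ 2 := by
    have hfη : ‖f η‖ ≤ ‖η‖ := by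
      calc ‖f η‖ ≤ ‖f‖ * ‖η‖ := f.le_opNorm η
        _ ≤ 1 * ‖η‖ := by gcongr
        _ = ‖η‖ := one_mul _
    have hns : ‖f η - η‖ ^ 2 =
        ‖f η‖ ^ 2 - 2 * RCLike.re (inner ℂ (f η) η : ℂ) + ‖η‖ ^ 2 :=
      norm_sub_sq (𝕜 := ℂ) (f η) η
    have hre : ‖η‖ ^ 2 - RCLike.re (inner ℂ (f η) η : ℂ) =
        RCLike.re (inner ℂ (η - f η) η : ℂ) := by
      rw [inner_sub_left, map_sub, inner_self_eq_norm_sq]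
    -- ⟪η - f η, η⟫ = ⟪a (η - f η), ξ⟫
    have hadj : (inner ℂ (η - f η) η : ℂ) = inner ℂ (a (η - f η)) ξ := by
      simp only [hη, ContinuousLinearMap.star_eq_adjoint]
      exact ContinuousLinearMap.adjoint_inner_right a _ ξ
    have haapp : a (η - f η) = ((a - a * f) * star a) ξ := by
      simp [hη, ContinuousLinearMap.mul_apply, map_sub]
    have hbound : RCLike.re (inner ℂ (η - f η) η : ℂ) ≤ ‖a * f - a‖ * ‖a‖ * ‖ξ‖ ^ 2 := by
      calc RCLike.re (inner ℂ (η - f η) η : ℂ)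
          ≤ ‖(inner ℂ (η - f η) η : ℂ)‖ := RCLike.re_le_norm _
        _ = ‖(inner ℂ (a (η - f η)) ξ : ℂ)‖ := by rw [hadj]
        _ ≤ ‖a (η - f η)‖ * ‖ξ‖ := norm_inner_le_norm _ _
        _ = ‖((a - a * f) * star a) ξ‖ * ‖ξ‖ := by rw [haapp]
        _ ≤ ‖(a - a * f) * star a‖ * ‖ξ‖ * ‖ξ‖ := by
            gcongr; exact ContinuousLinearMap.le_opNorm _ _
        _ ≤ ‖a - a * f‖ * ‖star a‖ * ‖ξ‖ * ‖ξ‖ := by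
            gcongr; exact norm_mul_le _ _
        _ = ‖a * f - a‖ * ‖a‖ * ‖ξ‖ ^ 2 := by
            rw [norm_star, norm_sub_rev]; ring
    calc ‖f η - η‖ ^ 2
        = ‖f η‖ ^ 2 - 2 * RCLike.re (inner ℂ (f η) η : ℂ) + ‖η‖ ^ 2 := hns
      _ ≤ ‖η‖ ^ 2 - 2 * RCLike.re (inner ℂ (f η) η : ℂ) + ‖η‖ ^ 2 := by
          nlinarith [hfη, norm_nonneg (f η), norm_nonneg η]
      _ = 2 * (‖η‖ ^ 2 - RCLike.re (inner ℂ (f η) η : ℂ)) := by ring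
      _ = 2 * RCLike.re (inner ℂ (η - f η) η : ℂ) := by rw [hre]
      _ ≤ 2 * (‖a * f - a‖ * ‖a‖ * ‖ξ‖ ^ 2) := by linarith [hbound]
      _ = K * ‖ξ‖ ^ 2 := by rw [hK]; ring
  -- take square roots
  have : ‖f η - η‖ = Real.sqrt (‖f η - η‖ ^ 2) := (Real.sqrt_sq (norm_nonneg _)).symm
  rw [this]
  calc Real.sqrt (‖f η - η‖ ^ 2) ≤ Real.sqrt (K * ‖ξ‖ ^ 2) := Real.sqrt_le_sqrt hsq
    _ = Real.sqrt K * ‖ξ‖ := by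
        rw [Real.sqrt_mul hK0, Real.sqrt_sq (norm_nonneg _)]

theorem stmt5 {H : Type*} [NormedAddCommGroup H] [InnerProductSpace ℂ H] [CompleteSpace H]
    {ι : Type*} [Preorder ι] [IsDirected ι (· ≤ ·)] [Nonempty ι]
    (A : NonUnitalSubalgebra ℂ (H →L[ℂ] H)) (hA : IsClosed (A : Set (H →L[ℂ] H)))
    (e : ι → H →L[ℂ] H) (heA : ∀ i, e i ∈ A) (he : ∀ i, ‖e i‖ ≤ 1)
    (hrcai : ∀ a ∈ A, Tendsto (fun i => ‖a * e i - a‖) atTop (𝓝 0))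
    (T : Submodule ℂ (H →L[ℂ] H)) (hTc : IsClosed (T : Set (H →L[ℂ] H)))
    (hAT : (A : Set (H →L[ℂ] H)) ⊆ T)
    (hTtriple : ∀ x ∈ T, ∀ y ∈ T, ∀ z ∈ T, x * star y * z ∈ T)
    (hTmin : ∀ S : Submodule ℂ (H →L[ℂ] H), IsClosed (S : Set (H →L[ℂ] H)) →
      (A : Set (H →L[ℂ] H)) ⊆ S →
      (∀ x ∈ S, ∀ y ∈ S, ∀ z ∈ S, x * star y * z ∈ S) → T ≤ S) :
    ∀ x ∈ T, Tendsto (fun i => ‖x * e i - x‖) atTop (𝓝 0) ∧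
      Tendsto (fun i => ‖x * star (e i) - x‖) atTop (𝓝 0) := by
  -- the candidate submodule
  let S : Submodule ℂ (H →L[ℂ] H) :=
    { carrier := {x : H →L[ℂ] H | x ∈ T ∧ Tendsto (fun i => x * e i) atTop (𝓝 x) ∧
        Tendsto (fun i => x * star (e i)) atTop (𝓝 x)}
      add_mem' := by
        rintro a b ⟨haT, ha1, ha2⟩ ⟨hbT, hb1, hb2⟩
        refine ⟨T.add_mem haT hbT, ?_, ?_⟩
        · simpa [add_mul] using ha1.add hb1
        · simpa [add_mul] using ha2.add hb2
      zero_mem' := by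
        refine ⟨T.zero_mem, ?_, ?_⟩ <;> simp
      smul_mem' := by
        rintro c a ⟨haT, ha1, ha2⟩
        refine ⟨T.smul_mem c haT, ?_, ?_⟩
        · simpa [smul_mul_assoc] using ha1.const_smul c
        · simpa [smul_mul_assoc] using ha2.const_smul c }
  have hSc : IsClosed (S : Set (H →L[ℂ] H)) := by
    have h1 := stmt5_aux_closed e he
    have h2 := stmt5_aux_closed (fun i => star (e i))
      (fun i => by simpa [norm_star] using he i)
    have hin := hTc.inter (h1.inter h2)
    have hset : (S : Set (H →L[ℂ] H)) = (T : Set (H →L[ℂ] H)) ∩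
        ({x : H →L[ℂ] H | Tendsto (fun i => x * e i) atTop (𝓝 x)} ∩
          {x : H →L[ℂ] H | Tendsto (fun i => x * star (e i)) atTop (𝓝 x)}) := by
      ext x
      simp only [Set.mem_inter_iff, Set.mem_setOf_eq, SetLike.mem_coe]
      constructor
      · rintro ⟨h₁, h₂, h₃⟩; exact ⟨h₁, h₂, h₃⟩
      · rintro ⟨h₁, h₂, h₃⟩; exact ⟨h₁, h₂, h₃⟩
    rw [hset]
    exact hin
  -- A ⊆ S
  have hAS : (A : Set (H →L[ℂ] H)) ⊆ (S : Set (H →L[ℂ] H)) := by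
    intro a haA
    have hn : Tendsto (fun i => ‖a * e i - a‖) atTop (𝓝 0) := hrcai a haA
    have h1 : Tendsto (fun i => a * e i) atTop (𝓝 a) := by
      rw [tendsto_iff_norm_sub_tendsto_zero]; exact hn
    have h2 : Tendsto (fun i => a * star (e i)) atTop (𝓝 a) := by
      rw [tendsto_iff_norm_sub_tendsto_zero]
      have hupper : Tendsto (fun i => Real.sqrt (2 * ‖a * e i - a‖ * ‖a‖)) atTop (𝓝 0) := by
        have hg : Tendsto (fun i => 2 * ‖a * e i - a‖ * ‖a‖) atTop (𝓝 0) := by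
          have := (hn.const_mul 2).mul_const ‖a‖
          simpa using this
        have hc : Tendsto Real.sqrt (𝓝 0) (𝓝 0) := by
          simpa using Real.continuous_sqrt.tendsto 0
        exact hc.comp hg
      refine squeeze_zero (fun i => norm_nonneg _) (fun i => ?_) hupper
      exact stmt5_aux_star a (e i) (he i)
    exact ⟨hAT haA, h1, h2⟩
  -- closure under triple products
  have hStriple : ∀ x ∈ S, ∀ y ∈ S, ∀ z ∈ S, x * star y * z ∈ S := by
    rintro x ⟨hxT, -, -⟩ y ⟨hyT, -, -⟩ z ⟨hzT, hz1, hz2⟩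
    refine ⟨hTtriple x hxT y hyT z hzT, ?_, ?_⟩
    · have := hz1.const_mul (x * star y)
      simpa only [mul_assoc] using this
    · have := hz2.const_mul (x * star y)
      simpa only [mul_assoc] using this
  have hTS := hTmin S hSc hAS hStriple
  intro x hxT
  obtain ⟨-, h1, h2⟩ := hTS hxT
  exact ⟨tendsto_iff_norm_sub_tendsto_zero.1 h1, tendsto_iff_norm_sub_tendsto_zero.1 h2⟩
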